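/- For integers $m \geq 0$ define $k_m(t) = (-1)^{m+1}\,\frac{2\,\Gamma\!\left(m+\tfrac{5}{2}\right)}{\sqrt{\pi}\,\Gamma(m+1)}\,t\,P_m^{(0,3/2)}(2t^2-1)$, and set $k_{-1}(t) = 0$. Then for all integers $m \geq 0$ and all $t \in \mathbb{R}$, the differential-difference equation $$t\,(1-t^2)\,\frac{d}{dt}k_m(t) = \left(\frac{4m^2+4m+3}{4m+3} - (2m+1)\,t^2\right)k_m(t) - \frac{(2m+3)^2}{4m+3}\,k_{m-1}(t)$$ holds. -/

import Mathlib

open Real Filter Finset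

noncomputable def poch (a : ℝ) (k : ℕ) : ℝ := (ascPochhammer ℝ k).eval a

/-- Jacobi polynomial `P_k^{(α,β)}(x) = ((α+1)_k / k!) ₂F₁(-k, k+α+β+1; α+1; (1-x)/2)`. -/
noncomputable def jacobiP (k : ℕ) (α β : ℝ) (x : ℝ) : ℝ :=
  (poch (α + 1) k / (Nat.factorial k : ℝ)) *
    ∑ i ∈ Finset.range (k + 1),
      poch (-(k : ℝ)) i * poch ((k : ℝ) + α + β + 1) i /
        (poch (α + 1) i * (Nat.factorial i : ℝ)) * ((1 - x) / 2) ^ i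

/-- The kernel `k_m(t)` for the first derivative. -/
noncomputable def km (m : ℕ) (t : ℝ) : ℝ :=
  (-1:ℝ)^(m+1) * (2 * Real.Gamma ((m:ℝ) + 5/2) /
      (Real.sqrt Real.pi * Real.Gamma ((m:ℝ) + 1))) *
    t * jacobiP m 0 (3/2) (2*t^2 - 1)

/-- `k_m` extended to integer indices with `k_{-1} = 0`. -/
noncomputable def kmZ (m : ℤ) (t : ℝ) : ℝ := if m < 0 then 0 else km m.toNat t

lemma poch_zero (a : ℝ) : poch a 0 = 1 := by simp [poch]
lemma poch_succ (a : ℝ) (k : ℕ) : poch a (k+1) = poch a k * (a + k) := by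
  simp [poch, ascPochhammer_succ_eval]
lemma poch_shift (x : ℝ) (j : ℕ) : x * poch (x+1) j = (x + j) * poch x j := by
  induction j with
  | zero => simp [poch_zero]
  | succ n ih =>
    rw [poch_succ, poch_succ, ← mul_assoc, ih]
    push_cast; ring

noncomputable def aa (m i : ℕ) : ℝ :=
  poch (-(m:ℝ)) i * poch ((m:ℝ) + 5/2) i / ((i.factorial : ℝ))^2

lemma poch_one (k : ℕ) : poch 1 k = k.factorial := by
  induction k with
  | zero => simp [poch_zero]
  | succ n ih => rw [poch_succ, ih, Nat.factorial_succ]; push_cast; ring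

lemma aa_zero (m : ℕ) : aa m 0 = 1 := by simp [aa, poch_zero]
lemma aa_top (k : ℕ) : aa k (k+1) = 0 := by
  unfold aa
  rw [poch_succ]
  simp

lemma key_scalar (k i : ℕ) :
    (4*((k:ℝ)+1)+3) * (2*(i:ℝ) - 2*((k:ℝ)+1)) * aa (k+1) i
      = ((2*((i:ℝ)+1))*(4*((k:ℝ)+1)+3) - 2*((k:ℝ)+1)*(2*((k:ℝ)+1)+3)) * aa (k+1) (i+1)
        + 2*((k:ℝ)+1)*(2*((k:ℝ)+1)+3) * aa k (i+1) := by
  have hk1 : ((k:ℝ)+1) ≠ 0 := by positivity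
  have hki : ((k:ℝ) + 5/2 + ((i:ℝ)+1)) ≠ 0 := by positivity
  have hfac : ((i.factorial:ℝ)) ≠ 0 := by exact_mod_cast Nat.factorial_ne_zero i
  have hi1 : ((i:ℝ)+1) ≠ 0 := by positivity
  have hfs : (((i+1).factorial : ℝ)) = ((i:ℝ)+1) * (i.factorial:ℝ) := by
    rw [Nat.factorial_succ]; push_cast; ring
  have e1 : poch (-((k:ℝ)+1)) (i+1) = poch (-((k:ℝ)+1)) i * (-((k:ℝ)+1) + i) :=
    poch_succ _ i
  have e2 : poch (((k:ℝ)+1) + 5/2) (i+1)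
      = poch (((k:ℝ)+1) + 5/2) i * (((k:ℝ)+1) + 5/2 + i) := poch_succ _ i
  have Ea := poch_shift (-((k:ℝ)+1)) (i+1)
  have Eb := poch_shift ((k:ℝ) + 5/2) (i+1)
  rw [show (-((k:ℝ)+1)) + 1 = -(k:ℝ) by ring] at Ea
  rw [show ((k:ℝ) + 5/2) + 1 = ((k:ℝ)+1) + 5/2 by ring] at Eb
  have e3 : poch (-(k:ℝ)) (i+1)
      = (((k:ℝ)+1) - ((i:ℝ)+1)) * (poch (-((k:ℝ)+1)) i * (-((k:ℝ)+1) + i)) / ((k:ℝ)+1) := by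
    rw [eq_div_iff hk1]
    rw [← e1]
    push_cast at Ea
    linarith [Ea]
  have e4 : poch ((k:ℝ)+5/2) (i+1)
      = ((k:ℝ)+5/2) * (poch (((k:ℝ)+1) + 5/2) i * (((k:ℝ)+1) + 5/2 + i)) / ((k:ℝ) + 5/2 + ((i:ℝ)+1)) := by
    rw [eq_div_iff hki]
    rw [← e2]
    push_cast at Eb
    linarith [Eb]
  unfold aa
  push_cast
  rw [hfs, e1, e2, e3, e4]
  field_simp [hfac, hi1, hk1, hki]
  ring

-- E_u : denominators (4M+3) cleared, M := (k:ℝ)+1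
lemma E_u (k : ℕ) (u : ℝ) :
    (4*((k:ℝ)+1)+3) * (u * (∑ i ∈ Finset.range (k+1+1), aa (k+1) i * u^i)
        - 2*u*(1-u) * (∑ i ∈ Finset.range (k+1+1), aa (k+1) i * ((i:ℝ) * u^(i-1))))
    = (-(2*((k:ℝ)+1)*(2*((k:ℝ)+1)+3)) + (2*((k:ℝ)+1)+1)*(4*((k:ℝ)+1)+3)*u)
        * (∑ i ∈ Finset.range (k+1+1), aa (k+1) i * u^i)
      + 2*((k:ℝ)+1)*(2*((k:ℝ)+1)+3) * (∑ i ∈ Finset.range (k+1), aa k i * u^i) := by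
  set M : ℝ := (k:ℝ)+1 with hMdef
  -- rewrite LHS as a single sum
  have hL : (4*M+3) * (u * (∑ i ∈ Finset.range (k+1+1), aa (k+1) i * u^i)
        - 2*u*(1-u) * (∑ i ∈ Finset.range (k+1+1), aa (k+1) i * ((i:ℝ) * u^(i-1))))
      = ∑ i ∈ Finset.range (k+1+1),
          (4*M+3) * (aa (k+1) i * ((2*(i:ℝ)+1)*u^(i+1) - 2*(i:ℝ)*u^i)) := by
    rw [Finset.mul_sum, Finset.mul_sum, ← Finset.sum_sub_distrib, Finset.mul_sum]
    refine Finset.sum_congr rfl fun i _ => ?_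
    cases i with
    | zero => push_cast; ring
    | succ j =>
      rw [Nat.succ_sub_one]
      push_cast; ring
  rw [hL]
  -- rewrite RHS similarly
  have hR : (-(2*M*(2*M+3)) + (2*M+1)*(4*M+3)*u)
        * (∑ i ∈ Finset.range (k+1+1), aa (k+1) i * u^i)
      = ∑ i ∈ Finset.range (k+1+1),
          aa (k+1) i * (-(2*M*(2*M+3))*u^i + (2*M+1)*(4*M+3)*u^(i+1)) := by
    rw [Finset.mul_sum]
    refine Finset.sum_congr rfl fun i _ => ?_
    ring
  rw [hR]
  -- move everything into one sum difference
  rw [← sub_eq_iff_eq_add', ← Finset.sum_sub_distrib]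
  have hC : ∀ i ∈ Finset.range (k+1+1),
      (4*M+3) * (aa (k+1) i * ((2*(i:ℝ)+1)*u^(i+1) - 2*(i:ℝ)*u^i))
        - aa (k+1) i * (-(2*M*(2*M+3))*u^i + (2*M+1)*(4*M+3)*u^(i+1))
      = ((4*M+3)*(2*(i:ℝ) - 2*M) * aa (k+1) i) * u^(i+1)
        + ((2*M*(2*M+3)) - (4*M+3)*2*(i:ℝ)) * aa (k+1) i * u^i := by
    intro i _
    ring
  rw [Finset.sum_congr rfl hC, Finset.sum_add_distrib]
  -- first piece: top term vanishes
  rw [Finset.sum_range_succ (fun i => ((4*M+3)*(2*(i:ℝ) - 2*M) * aa (k+1) i) * u^(i+1))]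
  have htop : ((4*M+3)*(2*((k+1:ℕ):ℝ) - 2*M) * aa (k+1) (k+1)) * u^(k+1+1) = 0 := by
    have : 2*((k+1:ℕ):ℝ) - 2*M = 0 := by push_cast [hMdef]; ring
    rw [this]; ring
  rw [htop, add_zero]
  -- second piece: peel off i = 0
  rw [Finset.sum_range_succ' (fun i => ((2*M*(2*M+3)) - (4*M+3)*2*(i:ℝ)) * aa (k+1) i * u^i)]
  -- RHS: peel off i = 0 and extend
  rw [Finset.mul_sum, Finset.sum_range_succ' (fun i => 2*M*(2*M+3) * (aa k i * u^i))]
  have hz : ((2*M*(2*M+3)) - (4*M+3)*2*((0:ℕ):ℝ)) * aa (k+1) 0 * u^0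
      = 2*M*(2*M+3) := by
    rw [aa_zero]; push_cast; ring
  have hz' : 2*M*(2*M+3) * (aa k 0 * u^0) = 2*M*(2*M+3) := by
    rw [aa_zero]; ring
  rw [hz, hz']
  -- extend prime sum from range k to range (k+1)
  have hext : ∑ i ∈ Finset.range k, 2*M*(2*M+3) * (aa k (i+1) * u^(i+1))
      = ∑ i ∈ Finset.range (k+1), 2*M*(2*M+3) * (aa k (i+1) * u^(i+1)) := by
    rw [Finset.sum_range_succ, aa_top]
    ring
  rw [hext, ← add_assoc, ← Finset.sum_add_distrib]
  refine congrArg₂ (· + ·) (Finset.sum_congr rfl fun i _ => ?_) rfl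
  have h := key_scalar k i
  push_cast [hMdef]
  push_cast at h
  linear_combination u^(i+1) * h

noncomputable def Cm (m : ℕ) : ℝ :=
  (-1:ℝ)^(m+1) * (2 * Real.Gamma ((m:ℝ) + 5/2) / (Real.sqrt Real.pi * Real.Gamma ((m:ℝ) + 1)))
noncomputable def Sm (m : ℕ) (t : ℝ) : ℝ :=
  ∑ i ∈ Finset.range (m+1), aa m i * (1 - t^2)^i
noncomputable def Sm' (m : ℕ) (t : ℝ) : ℝ :=
  ∑ i ∈ Finset.range (m+1), aa m i * ((i:ℝ) * (1 - t^2)^(i-1) * (-(2*t)))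

lemma km_eq (m : ℕ) (t : ℝ) : km m t = Cm m * (t * Sm m t) := by
  unfold km Cm Sm jacobiP
  rw [show (0:ℝ)+1 = 1 by norm_num, poch_one m,
    div_self (by exact_mod_cast Nat.factorial_ne_zero m), one_mul]
  rw [mul_assoc]
  congr 1
  congr 1
  refine Finset.sum_congr rfl fun i _ => ?_
  rw [poch_one i]
  unfold aa
  rw [show (1 - (2*t^2 - 1))/2 = 1 - t^2 by ring,
    show (m:ℝ) + 0 + 3/2 + 1 = (m:ℝ) + 5/2 by ring]
  ring

lemma hasDerivAt_km (m : ℕ) (t : ℝ) :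
    HasDerivAt (km m) (Cm m * (Sm m t + t * Sm' m t)) t := by
  have hfun : km m = fun t => Cm m * (t * Sm m t) := funext (km_eq m)
  rw [hfun]
  have hS : HasDerivAt (fun t => Sm m t) (Sm' m t) t := by
    unfold Sm Sm'
    apply HasDerivAt.fun_sum
    intro i _
    have h1 : HasDerivAt (fun x : ℝ => 1 - x^2) (-(2*t)) t := by
      simpa using (hasDerivAt_pow 2 t).const_sub 1
    exact (h1.pow i).const_mul (aa m i)
  have := ((hasDerivAt_id t).mul hS).const_mul (Cm m)
  simpa using this

lemma Cm_ratio (k : ℕ) :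
    (2*((k:ℝ)+1)+3) * Cm k = -(2*((k:ℝ)+1)) * Cm (k+1) := by
  have h1 : Real.Gamma (((k+1:ℕ):ℝ) + 5/2) = ((k:ℝ)+5/2) * Real.Gamma ((k:ℝ)+5/2) := by
    rw [show ((k+1:ℕ):ℝ) + 5/2 = ((k:ℝ)+5/2) + 1 by push_cast; ring]
    exact Real.Gamma_add_one (by positivity)
  have h2 : Real.Gamma (((k+1:ℕ):ℝ) + 1) = ((k:ℝ)+1) * Real.Gamma ((k:ℝ)+1) := by
    rw [show ((k+1:ℕ):ℝ) + 1 = ((k:ℝ)+1) + 1 by push_cast; ring]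
    exact Real.Gamma_add_one (by positivity)
  have hG : Real.Gamma ((k:ℝ)+1) ≠ 0 :=
    ne_of_gt (Real.Gamma_pos_of_pos (by positivity))
  have hpi : Real.sqrt Real.pi ≠ 0 := by
    exact ne_of_gt (Real.sqrt_pos.mpr Real.pi_pos)
  unfold Cm
  rw [h1, h2, pow_succ ((-1:ℝ)) (k+1)]
  field_simp
  ring

lemma E_t (k : ℕ) (t : ℝ) :
    (4*((k:ℝ)+1)+3) * ((1-t^2) * (Sm (k+1) t + t * Sm' (k+1) t))
    = (-(2*((k:ℝ)+1)*(2*((k:ℝ)+1)+3)) + (2*((k:ℝ)+1)+1)*(4*((k:ℝ)+1)+3)*(1-t^2)) * Sm (k+1) t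
      + 2*((k:ℝ)+1)*(2*((k:ℝ)+1)+3) * Sm k t := by
  have h := E_u k (1-t^2)
  have hSm : Sm (k+1) t = ∑ i ∈ Finset.range (k+1+1), aa (k+1) i * (1-t^2)^i := rfl
  have hSk : Sm k t = ∑ i ∈ Finset.range (k+1), aa k i * (1-t^2)^i := rfl
  have hS' : (1-t^2) * (t * Sm' (k+1) t)
      = -(2*(1-t^2)*(1-(1-t^2)))
          * ∑ i ∈ Finset.range (k+1+1), aa (k+1) i * ((i:ℝ)*(1-t^2)^(i-1)) := by
    unfold Sm'
    rw [Finset.mul_sum, Finset.mul_sum, Finset.mul_sum]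
    exact Finset.sum_congr rfl fun i _ => by ring
  rw [hSm, hSk]
  linear_combination h + (4*((k:ℝ)+1)+3) * hS'

theorem stmt12 (m : ℕ) (t : ℝ) :
    t * (1 - t^2) * deriv (km m) t =
      ((4*(m:ℝ)^2 + 4*(m:ℝ) + 3) / (4*(m:ℝ) + 3) - (2*(m:ℝ) + 1) * t^2) * km m t
        - (2*(m:ℝ) + 3)^2 / (4*(m:ℝ) + 3) * kmZ ((m:ℤ) - 1) t := by
  cases m with
  | zero =>
    have hd := (hasDerivAt_km 0 t).deriv
    rw [hd, km_eq 0 t]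
    have hZ : kmZ (((0:ℕ):ℤ) - 1) t = 0 := by norm_num [kmZ]
    rw [hZ]
    have h1 : Sm 0 t = 1 := by simp [Sm, aa_zero]
    have h2 : Sm' 0 t = 0 := by simp [Sm']
    rw [h1, h2]
    push_cast
    norm_num
    ring
  | succ k =>
    have hd := (hasDerivAt_km (k+1) t).deriv
    have hZ : kmZ (((k+1:ℕ):ℤ) - 1) t = km k t := by
      have h : (((k+1:ℕ):ℤ) - 1) = (k:ℤ) := by push_cast; ring
      rw [h]
      simp [kmZ]
    rw [hd, hZ, km_eq (k+1) t, km_eq k t]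
    have hE := E_t k t
    have hrat := Cm_ratio k
    have h43 : (4*((k:ℝ)+1)+3) ≠ 0 := by positivity
    push_cast
    have h1 : (4*((k:ℝ)+1)+3) * ((4*((k:ℝ)+1)^2+4*((k:ℝ)+1)+3)/(4*((k:ℝ)+1)+3))
        = 4*((k:ℝ)+1)^2+4*((k:ℝ)+1)+3 := by field_simp
    have h2 : (4*((k:ℝ)+1)+3) * ((2*((k:ℝ)+1)+3)^2/(4*((k:ℝ)+1)+3))
        = (2*((k:ℝ)+1)+3)^2 := by field_simp
    refine mul_left_cancel₀ h43 ?_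
    linear_combination (t * Cm (k+1)) * hE
      + (-(Cm (k+1) * (t * Sm (k+1) t))) * h1
      + (Cm k * (t * Sm k t)) * h2
      + ((2*((k:ℝ)+1)+3) * t * Sm k t) * hrat
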